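/- (Pólya–Gamma integral identity) For all ψ ∈ ℝ, a ∈ ℝ, with κ = a - 1/2: (e^ψ)^a / (1 + e^ψ) = 2^{-1} e^{κψ} ∫₀^∞ e^{-vψ²/2} g(v | 1, 0) dv, where g(·|1,0) is the PG(1,0) density. -/
import Mathlib


open MeasureTheory Set

/-- Pólya–Gamma integral identity: for the PG(1,0) density `g`,
`e^{aψ}/(1+e^ψ) = 2⁻¹ e^{κψ} ∫₀^∞ e^{-vψ²/2} g(v) dv` with `κ = a - 1/2`. -/
theorem polyaGamma_integral_identity (g : ℝ → ℝ)
    (hg_nonneg : ∀ v ∈ Ioi (0 : ℝ), 0 ≤ g v)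
    (hLaplace : ∀ t : ℝ, 0 ≤ t →
      ∫ v in Ioi (0 : ℝ), Real.exp (-t * v) * g v = 1 / Real.cosh (Real.sqrt (t / 2)))
    (ψ a : ℝ) :
    Real.exp ψ ^ a / (1 + Real.exp ψ)
      = 2⁻¹ * Real.exp ((a - 1 / 2) * ψ)
        * ∫ v in Ioi (0 : ℝ), Real.exp (-v * ψ ^ 2 / 2) * g v := by
  have ht : (0:ℝ) ≤ ψ ^ 2 / 2 := by positivity
  have h := hLaplace (ψ ^ 2 / 2) ht
  have hconv : (∫ v in Ioi (0:ℝ), Real.exp (-v * ψ ^ 2 / 2) * g v)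
      = ∫ v in Ioi (0:ℝ), Real.exp (-(ψ ^ 2 / 2) * v) * g v := by
    congr 1
    ext v
    congr 2
    ring
  rw [hconv, h]
  have hsq : Real.sqrt (ψ ^ 2 / 2 / 2) = |ψ| / 2 := by
    rw [show ψ ^ 2 / 2 / 2 = (ψ / 2) ^ 2 by ring, Real.sqrt_sq_eq_abs, abs_div]
    simp
  rw [hsq]
  have hcosh : Real.cosh (|ψ| / 2) = Real.cosh (ψ / 2) := by
    rcases abs_cases ψ with ⟨h1, _⟩ | ⟨h1, _⟩ <;> rw [h1]
    rw [neg_div, Real.cosh_neg]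
  rw [hcosh, Real.rpow_def_of_pos (Real.exp_pos ψ), Real.log_exp, Real.cosh_eq]
  have h1 : (0:ℝ) < Real.exp (ψ / 2) + Real.exp (-(ψ / 2)) := by positivity
  have h2 : (0:ℝ) < 1 + Real.exp ψ := by positivity
  have key : Real.exp (ψ * a) * (Real.exp (ψ / 2) + Real.exp (-(ψ / 2)))
      = Real.exp ((a - 1 / 2) * ψ) * (1 + Real.exp ψ) := by
    rw [mul_add, mul_add, mul_one, ← Real.exp_add, ← Real.exp_add, ← Real.exp_add]
    ring_nf
  field_simp
  ring_nf
  ring_nf at key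
  linarith [key]
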